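/- Let Y be a closed orientable smooth 11-dimensional manifold. Then the Stiefel–Whitney classes of its tangent bundle satisfy w_9(Y) = w_10(Y) = w_11(Y) = 0 in H^*(Y; Z/2). -/
import Mathlib


/-- Let `Y` be a closed orientable smooth 11-dimensional manifold. Then the
Stiefel–Whitney classes of its tangent bundle satisfy `w₉(Y) = w₁₀(Y) = w₁₁(Y) = 0` in
`H^*(Y; ℤ/2)`.

The mod 2 cohomology of the closed 11-manifold `Y` is abstracted as a graded commutative
`ℤ/2`-algebra `A` equipped with Steenrod squares `Sq`, the Stiefel–Whitney classes `w` of the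
tangent bundle, and the Wu classes `ν`, subject to their standard defining properties:
`ν i` is the unique class with `Sq i x = x * ν i` on `H^{11-i}`, Wu's formula
`w k = ∑_{i} Sq^{k-i} ν i` holds, orientability gives `w 1 = 0` and triviality of the
Bockstein `Sq¹ : H¹⁰ → H¹¹`, and the Adem relation `Sq^i = Sq¹ Sq^{i-1}` holds for odd `i`. -/
theorem ninebrane_stmt0
    (A : Type) [CommRing A] [Algebra (ZMod 2) A]
    (deg : ℕ → Submodule (ZMod 2) A)
    (Sq : ℕ → A →ₗ[ZMod 2] A)
    (w ν : ℕ → A)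
    (hw_deg : ∀ i, w i ∈ deg i)
    (hν_deg : ∀ i, ν i ∈ deg i)
    (hSq_deg : ∀ i n (x : A), x ∈ deg n → Sq i x ∈ deg (n + i))
    (hSq_vanish : ∀ n (x : A), x ∈ deg n → ∀ i, n < i → Sq i x = 0)
    (hSq_zero : ∀ (x : A), Sq 0 x = x)
    (hdim : ∀ n (x : A), 11 < n → x ∈ deg n → x = 0)
    (hν0 : ν 0 = 1)
    (hWu : ∀ i, i ≤ 11 → ∀ x ∈ deg (11 - i), Sq i x = x * ν i)
    (hWu_unique : ∀ i, i ≤ 11 → ∀ v ∈ deg i,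
      (∀ x ∈ deg (11 - i), Sq i x = x * v) → v = ν i)
    (hWuFormula : ∀ k, w k = ∑ i ∈ Finset.range (k + 1), Sq (k - i) (ν i))
    (hOrient : w 1 = 0)
    (hBockstein : ∀ x ∈ deg 10, Sq 1 x = 0)
    (hAdem : ∀ i, Odd i → 1 < i → ∀ x : A, Sq i x = Sq 1 (Sq (i - 1) x)) :
    w 9 = 0 ∧ w 10 = 0 ∧ w 11 = 0 := by
  have h1 : (1:A) ∈ deg 0 := hν0 ▸ hν_deg 0
  have hν1 : ν 1 = 0 := by
    have h := hWuFormula 1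
    rw [Finset.sum_range_succ, Finset.sum_range_succ, Finset.sum_range_zero,
      hν0, hSq_zero, hSq_vanish 0 1 h1 1 (by norm_num), hOrient] at h
    simpa using h.symm
  have hν5 : ν 5 = 0 := by
    refine (hWu_unique 5 (by norm_num) 0 (Submodule.zero_mem _) ?_).symm
    intro x hx
    rw [hAdem 5 (by decide) (by norm_num)]
    show Sq 1 (Sq 4 x) = x * 0
    rw [hBockstein _ (hSq_deg 4 6 x hx), mul_zero]
  have hhi : ∀ i, 6 ≤ i → i ≤ 11 → ν i = 0 := by
    intro i h6 h11
    refine (hWu_unique i h11 0 (Submodule.zero_mem _) ?_).symm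
    intro x hx
    rw [hSq_vanish _ x hx i (by omega), mul_zero]
  have hex : ∀ i j, i < j → Sq j (ν i) = 0 := fun i j h => hSq_vanish i (ν i) (hν_deg i) j h
  refine ⟨?_, ?_, ?_⟩ <;>
  · rw [hWuFormula]
    simp only [Finset.sum_range_succ, Finset.sum_range_zero, hν0, hν1, hν5,
      hhi 6 (by norm_num) (by norm_num), hhi 7 (by norm_num) (by norm_num),
      hhi 8 (by norm_num) (by norm_num), hhi 9 (by norm_num) (by norm_num),
      hhi 10 (by norm_num) (by norm_num), hhi 11 (by norm_num) (by norm_num),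
      map_zero, hSq_zero, hSq_vanish 0 1 h1 _ (by norm_num : (0:ℕ) < 9),
      hSq_vanish 0 1 h1 _ (by norm_num : (0:ℕ) < 10),
      hSq_vanish 0 1 h1 _ (by norm_num : (0:ℕ) < 11),
      hex 2 7 (by norm_num), hex 3 6 (by norm_num), hex 4 5 (by norm_num),
      hex 2 8 (by norm_num), hex 3 7 (by norm_num), hex 4 6 (by norm_num),
      hex 2 9 (by norm_num), hex 3 8 (by norm_num), hex 4 7 (by norm_num),
      add_zero, zero_add]
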